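/- Let Ψ be an irreducible root system with highest root ρ, and let β₁, β₂, β₃, β₄ be long roots each with ⟨βᵢ, ρ⟩ = 1 and with β₁+β₂+β₃+β₄ = 2ρ. Then ⟨β₁,β₂⟩ = ⟨β₃,β₄⟩. -/

import Mathlib

open scoped RealInnerProductSpace

/-- An irreducible (reduced, crystallographic) root system together with a base
and the highest root `ρ` with respect to that base. -/
structure BasedRootSystem (ι V : Type*) [Fintype ι]
    [NormedAddCommGroup V] [InnerProductSpace ℝ V] where
  Ψ : Set V
  base : ι → V
  ρ : V
  finite : Ψ.Finite
  ne_zero : ∀ β ∈ Ψ, β ≠ 0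
  neg_mem : ∀ β ∈ Ψ, -β ∈ Ψ
  base_mem : ∀ i, base i ∈ Ψ
  reduced : ∀ β ∈ Ψ, ∀ t : ℝ, t • β ∈ Ψ → t = 1 ∨ t = -1
  cartanInt : ∀ β ∈ Ψ, ∀ γ ∈ Ψ, ∃ n : ℤ, 2 * ⟪β, γ⟫ / ⟪γ, γ⟫ = (n : ℝ)
  reflect_mem : ∀ β ∈ Ψ, ∀ γ ∈ Ψ, β - (2 * ⟪β, γ⟫ / ⟪γ, γ⟫) • γ ∈ Ψ
  irreducible : ∀ S₁ S₂ : Set V, (∀ β ∈ Ψ, β ∈ S₁ ∨ β ∈ S₂) →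
    (∀ x ∈ S₁, ∀ y ∈ S₂, ⟪x, y⟫ = 0) → (∀ β ∈ Ψ, β ∈ S₁) ∨ (∀ β ∈ Ψ, β ∈ S₂)
  base_pos : ∀ β ∈ Ψ, (∃ c : ι → ℕ, β = ∑ i, (c i : ℝ) • base i) ∨
    (∃ c : ι → ℕ, β = -∑ i, (c i : ℝ) • base i)
  rho_mem : ρ ∈ Ψ
  rho_highest : ∀ β ∈ Ψ, ∃ c : ι → ℕ, ρ - β = ∑ i, (c i : ℝ) • base i

namespace BasedRootSystem

variable {ι V : Type*} [Fintype ι] [NormedAddCommGroup V] [InnerProductSpace ℝ V]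

/-- The Cartan pairing `⟨β, γ⟩ = 2(β,γ)/(γ,γ)`. -/
noncomputable def pair (_S : BasedRootSystem ι V) (β γ : V) : ℝ :=
  2 * ⟪β, γ⟫ / ⟪γ, γ⟫

/-- A root is long if it has the same length as the highest root. -/
def IsLong (S : BasedRootSystem ι V) (β : V) : Prop := ⟪β, β⟫ = ⟪S.ρ, S.ρ⟫

end BasedRootSystem

/-- For long roots β₁,…,β₄ of α-height 1 summing to 2ρ, ⟨β₁,β₂⟩ = ⟨β₃,β₄⟩. -/
theorem stmt5 {ι V : Type*} [Fintype ι] [NormedAddCommGroup V] [InnerProductSpace ℝ V]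
    (S : BasedRootSystem ι V) (β : Fin 4 → V) (hβ : ∀ i, β i ∈ S.Ψ)
    (hlong : ∀ i, S.IsLong (β i))
    (hht : ∀ i, S.pair (β i) S.ρ = 1)
    (hsum : β 0 + β 1 + β 2 + β 3 = (2 : ℝ) • S.ρ) :
    S.pair (β 0) (β 1) = S.pair (β 2) (β 3) := by
  set c : ℝ := ⟪S.ρ, S.ρ⟫ with hc
  have hc0 : c ≠ 0 := by
    intro h
    have h0 := hht 0
    unfold BasedRootSystem.pair at h0
    rw [← hc, h] at h0
    simp at h0
  have hip : ∀ i, ⟪β i, S.ρ⟫ = c / 2 := by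
    intro i
    have h0 := hht i
    unfold BasedRootSystem.pair at h0
    rw [← hc] at h0
    field_simp at h0
    linarith
  have hA : ∀ i, ⟪β i, β 0⟫ + ⟪β i, β 1⟫ + ⟪β i, β 2⟫ + ⟪β i, β 3⟫ = c := by
    intro i
    have h := congrArg (fun v => ⟪β i, v⟫) hsum
    simp only [inner_add_right, real_inner_smul_right] at h
    rw [hip i] at h
    linarith
  have h0 := hA 0; have h1 := hA 1; have h2 := hA 2; have h3 := hA 3
  have d0 := hlong 0; have d1 := hlong 1; have d2 := hlong 2; have d3 := hlong 3
  unfold BasedRootSystem.IsLong at d0 d1 d2 d3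
  rw [← hc] at d0 d1 d2 d3
  have s01 : ⟪β 1, β 0⟫ = ⟪β 0, β 1⟫ := real_inner_comm _ _
  have s02 : ⟪β 2, β 0⟫ = ⟪β 0, β 2⟫ := real_inner_comm _ _
  have s03 : ⟪β 3, β 0⟫ = ⟪β 0, β 3⟫ := real_inner_comm _ _
  have s12 : ⟪β 2, β 1⟫ = ⟪β 1, β 2⟫ := real_inner_comm _ _
  have s13 : ⟪β 3, β 1⟫ = ⟪β 1, β 3⟫ := real_inner_comm _ _
  have s23 : ⟪β 3, β 2⟫ = ⟪β 2, β 3⟫ := real_inner_comm _ _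
  have key : ⟪β 0, β 1⟫ = ⟪β 2, β 3⟫ := by linarith
  unfold BasedRootSystem.pair
  rw [d1, d3, key]
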